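/- Let k and ℓ be integers with 3 ≤ k ≤ ℓ and let H_{k,ℓ} be the graph described in the context. Then every total dominating set of H_{k,ℓ} that contains none of the vertices u, v, w has at least 2(k+ℓ−2) vertices. -/
import Mathlib


/-- The three special vertices `u`, `v`, `w`. -/
inductive UVW : Type
  | u | v | w
deriving DecidableEq

/-- Vertices of `H_{k,ℓ}`: triangle vertices `t_{i,j}` as `Sum.inl (i,j)`
(0-indexed, `i : Fin (k+ℓ-2)`, `j : Fin 3`), plus `u`, `v`, `w`. -/
abbrev HklV (k l : ℕ) := (Fin (k + l - 2) × Fin 3) ⊕ UVW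

/-- Edge relation of `H_{k,ℓ}`: triangles on each `t_{i,·}`; the edge `uv`;
`u` adjacent to `t_{i,1}` (0-indexed `j = 0`) for all `i` and to `t_{i,2}`,
`t_{i,3}` for `i ≥ k` (0-indexed `k-1 ≤ i.val`); `v` adjacent to `t_{i,1}`,
`t_{i,2}` for all `i` and to `t_{i,3}` for `i ≥ k`; `w` adjacent to `t_{i,1}`,
`t_{i,2}` for all `i` and to `t_{i,3}` for `i ≤ k-1` (0-indexed
`i.val < k-1`); `w` adjacent to neither `u` nor `v`. -/
def HklRel (k l : ℕ) : HklV k l → HklV k l → Prop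
  | .inl p, .inl q => p.1 = q.1
  | .inr .u, .inl p =>
      p.2.val = 0 ∨ (k - 1 ≤ p.1.val ∧ (p.2.val = 1 ∨ p.2.val = 2))
  | .inr .v, .inl p =>
      p.2.val = 0 ∨ p.2.val = 1 ∨ (k - 1 ≤ p.1.val ∧ p.2.val = 2)
  | .inr .w, .inl p =>
      p.2.val = 0 ∨ p.2.val = 1 ∨ (p.1.val < k - 1 ∧ p.2.val = 2)
  | .inr .u, .inr .v => True
  | _, _ => False

/-- The graph `H_{k,ℓ}`. -/
def Hkl (k l : ℕ) : SimpleGraph (HklV k l) := SimpleGraph.fromRel (HklRel k l)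

/-- `D` is a total dominating set of `G`. -/
def IsTotalDomSet {V : Type*} (G : SimpleGraph V) (D : Finset V) : Prop :=
  ∀ v : V, ∃ d ∈ D, G.Adj v d

/-- Every total dominating set of `H_{k,ℓ}` containing none of `u`, `v`, `w`
has at least `2(k+ℓ-2)` vertices. -/
theorem stmt15 (k l : ℕ) (hk : 3 ≤ k) (hkl : k ≤ l)
    (D : Finset (HklV k l)) (hD : IsTotalDomSet (Hkl k l) D)
    (hu : (Sum.inr UVW.u : HklV k l) ∉ D)
    (hv : (Sum.inr UVW.v : HklV k l) ∉ D)
    (hw : (Sum.inr UVW.w : HklV k l) ∉ D) :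
    2 * (k + l - 2) ≤ D.card := by
  classical
  -- every vertex of triangle i has a dominator inside triangle i
  have key : ∀ (i : Fin (k + l - 2)) (a : Fin 3),
      ∃ d ∈ D, d ≠ Sum.inl (i, a) ∧ ∃ b : Fin 3, d = Sum.inl (i, b) := by
    intro i a
    obtain ⟨d, hdD, hadj⟩ := hD (Sum.inl (i, a))
    rw [Hkl, SimpleGraph.fromRel_adj] at hadj
    obtain ⟨hne, hrel⟩ := hadj
    refine ⟨d, hdD, fun h => hne h.symm, ?_⟩
    match d with
    | Sum.inl q =>
      rcases hrel with h | h
      · exact ⟨q.2, by cases q; simp_all [HklRel]⟩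
      · exact ⟨q.2, by cases q; simp_all [HklRel]⟩
    | Sum.inr UVW.u => exact absurd hdD hu
    | Sum.inr UVW.v => exact absurd hdD hv
    | Sum.inr UVW.w => exact absurd hdD hw
  set T : Fin (k + l - 2) → Finset (HklV k l) :=
    fun i => D.filter (fun x => ∃ b : Fin 3, x = Sum.inl (i, b)) with hT
  have hTcard : ∀ i, 2 ≤ (T i).card := by
    intro i
    obtain ⟨d, hdD, hdne, b, hdb⟩ := key i 0
    obtain ⟨e, heD, hene, c, hec⟩ := key i b
    have hde : d ≠ e := by
      intro h; apply hene; rw [← h, hdb]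
    have hd : d ∈ T i := by simp [hT, hdD]; exact ⟨b, hdb⟩
    have he : e ∈ T i := by simp [hT, heD]; exact ⟨c, hec⟩
    have : ({d, e} : Finset (HklV k l)) ⊆ T i := by
      intro x hx; simp at hx; rcases hx with h | h <;> subst h <;> assumption
    calc 2 = ({d, e} : Finset (HklV k l)).card := by
            rw [Finset.card_insert_of_notMem (by simpa using hde)]; simp
      _ ≤ (T i).card := Finset.card_le_card this
  have hdisj : ∀ i ∈ (Finset.univ : Finset (Fin (k + l - 2))), ∀ j ∈ Finset.univ,
      i ≠ j → Disjoint (T i) (T j) := by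
    intro i _ j _ hij
    rw [Finset.disjoint_left]
    rintro x hx hx'
    simp only [hT, Finset.mem_filter] at hx hx'
    obtain ⟨-, b, rfl⟩ := hx
    obtain ⟨-, c, hc⟩ := hx'
    exact hij (by simpa using congrArg (fun y => match y with | Sum.inl p => p.1 | _ => i) hc)
  have hsub : (Finset.univ.biUnion T) ⊆ D := by
    intro x hx
    simp only [Finset.mem_biUnion, hT, Finset.mem_filter] at hx
    obtain ⟨i, -, hxD, -⟩ := hx
    exact hxD
  calc 2 * (k + l - 2) = ∑ _i : Fin (k + l - 2), 2 := by
        simp [Finset.sum_const, mul_comm]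
    _ ≤ ∑ i, (T i).card := Finset.sum_le_sum fun i _ => hTcard i
    _ = (Finset.univ.biUnion T).card := (Finset.card_biUnion hdisj).symm
    _ ≤ D.card := Finset.card_le_card hsub
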